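/- arXiv:2104.09264 — 4 statements merged into one kernel-verified Lean document; each statement's English description precedes it below -/
import Mathlib

section
/- Let E be a real inner product space, ε > 0, g₁, g₂ ∈ E, and p₁, p₂ ∈ ℝ. Set A₁ := √(‖g₁‖²+ε²) and A₂ := √(‖g₂‖²+ε²). Then p₁·g₁/A₁ − p₂·g₂/A₂ = (1/2)·(p₁/A₂ + p₂/A₁)·(g₁ − g₂) − (1/2)·(⟨g₁+g₂, g₁−g₂⟩/(A₁·A₂·(A₁+A₂)))·(p₁·g₁ + p₂·g₂) + ((p₁−p₂)/2)·(g₁/A₁ + g₂/A₂). -/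
/-- Symmetric-form difference identity (equation (5.13) of the paper) for the
pointwise nonlinearity `g ↦ p·g/√(‖g‖²+ε²)` of the regularized viscous-plastic
stress `𝕊_ε`. -/
theorem stmt1 {E : Type*} [NormedAddCommGroup E] [InnerProductSpace ℝ E]
    (ε : ℝ) (hε : 0 < ε) (g₁ g₂ : E) (p₁ p₂ : ℝ) (A₁ A₂ : ℝ)
    (hA₁ : A₁ = Real.sqrt (‖g₁‖ ^ 2 + ε ^ 2))
    (hA₂ : A₂ = Real.sqrt (‖g₂‖ ^ 2 + ε ^ 2)) :
    (p₁ / A₁) • g₁ - (p₂ / A₂) • g₂ =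
      ((1 / 2) * (p₁ / A₂ + p₂ / A₁)) • (g₁ - g₂)
        - ((1 / 2) * ((inner ℝ (g₁ + g₂) (g₁ - g₂) : ℝ) / (A₁ * A₂ * (A₁ + A₂))))
            • (p₁ • g₁ + p₂ • g₂)
        + ((p₁ - p₂) / 2) • ((1 / A₁) • g₁ + (1 / A₂) • g₂) := by
  have hA₁pos : 0 < A₁ := by
    rw [hA₁]; exact Real.sqrt_pos.2 (by positivity)
  have hA₂pos : 0 < A₂ := by
    rw [hA₂]; exact Real.sqrt_pos.2 (by positivity)
  have hsq₁ : A₁ ^ 2 = ‖g₁‖ ^ 2 + ε ^ 2 := by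
    rw [hA₁, Real.sq_sqrt (by positivity)]
  have hsq₂ : A₂ ^ 2 = ‖g₂‖ ^ 2 + ε ^ 2 := by
    rw [hA₂, Real.sq_sqrt (by positivity)]
  have hinner : (inner ℝ (g₁ + g₂) (g₁ - g₂) : ℝ) = A₁ ^ 2 - A₂ ^ 2 := by
    rw [inner_add_left, inner_sub_right, inner_sub_right,
      real_inner_self_eq_norm_sq, real_inner_self_eq_norm_sq,
      real_inner_comm g₂ g₁, hsq₁, hsq₂]
    ring
  rw [hinner]
  have h1 : A₁ ≠ 0 := ne_of_gt hA₁pos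
  have h2 : A₂ ≠ 0 := ne_of_gt hA₂pos
  have h3 : A₁ + A₂ ≠ 0 := by positivity
  match_scalars <;> field_simp <;> ring
end

section
/- Let E be a real inner product space, ε > 0, p₁, p₂ ≥ 0 real numbers, and g₁, g₂, d ∈ E. Set A₁ := √(‖g₁‖²+ε²) and A₂ := √(‖g₂‖²+ε²), and define M := (p₁·A₁ + p₂·A₂)·(A₁+A₂)·‖d‖² − ⟨g₁+g₂, d⟩·⟨p₁·g₁ + p₂·g₂, d⟩. Then M ≥ 2·(p₁+p₂)·ε²·‖d‖². -/
set_option maxHeartbeats 1000000 in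
/-- Strict positivity of the numerator `M` appearing in the symmetric-form
difference identity for the regularized viscous-plastic stress `𝕊_ε`:
`M ≥ 2(p₁+p₂)ε²‖d‖²`. -/
theorem stmt4 {E : Type*} [NormedAddCommGroup E] [InnerProductSpace ℝ E]
    (ε : ℝ) (hε : 0 < ε) (p₁ p₂ : ℝ) (hp₁ : 0 ≤ p₁) (hp₂ : 0 ≤ p₂)
    (g₁ g₂ d : E) (A₁ A₂ M : ℝ)
    (hA₁ : A₁ = Real.sqrt (‖g₁‖ ^ 2 + ε ^ 2))
    (hA₂ : A₂ = Real.sqrt (‖g₂‖ ^ 2 + ε ^ 2))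
    (hM : M = (p₁ * A₁ + p₂ * A₂) * (A₁ + A₂) * ‖d‖ ^ 2
      - (inner ℝ (g₁ + g₂) d : ℝ) * (inner ℝ (p₁ • g₁ + p₂ • g₂) d : ℝ)) :
    M ≥ 2 * (p₁ + p₂) * ε ^ 2 * ‖d‖ ^ 2 := by
  set a := ‖g₁‖ with hadef
  set b := ‖g₂‖ with hbdef
  set n := ‖d‖ with hndef
  have ha : 0 ≤ a := norm_nonneg _
  have hb : 0 ≤ b := norm_nonneg _
  have hn : 0 ≤ n := norm_nonneg _
  have hA1sq : A₁ ^ 2 = a ^ 2 + ε ^ 2 := by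
    rw [hA₁, Real.sq_sqrt (by positivity)]
  have hA2sq : A₂ ^ 2 = b ^ 2 + ε ^ 2 := by
    rw [hA₂, Real.sq_sqrt (by positivity)]
  have hAA : a * b + ε ^ 2 ≤ A₁ * A₂ := by
    rw [hA₁, hA₂, ← Real.sqrt_mul (by positivity)]
    have h0 : a * b + ε ^ 2 = Real.sqrt ((a * b + ε ^ 2) ^ 2) :=
      (Real.sqrt_sq (by positivity)).symm
    rw [h0]
    apply Real.sqrt_le_sqrt
    nlinarith [sq_nonneg (a - b), sq_nonneg ε]
  set u := (inner ℝ g₁ d : ℝ) with hudef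
  set v := (inner ℝ g₂ d : ℝ) with hvdef
  have hu : |u| ≤ a * n := abs_real_inner_le_norm g₁ d
  have hv : |v| ≤ b * n := abs_real_inner_le_norm g₂ d
  have hu2 : u ^ 2 ≤ a ^ 2 * n ^ 2 := by nlinarith [abs_nonneg u, sq_abs u]
  have hv2 : v ^ 2 ≤ b ^ 2 * n ^ 2 := by nlinarith [abs_nonneg v, sq_abs v]
  have huv : -(a * b * n ^ 2) ≤ u * v := by
    have h1 := neg_abs_le (u * v)
    have h2 : |u * v| ≤ a * n * (b * n) := by
      rw [abs_mul]; exact mul_le_mul hu hv (abs_nonneg v) (by positivity)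
    nlinarith
  have huv' : u * v ≤ a * b * n ^ 2 := by
    have h1 := le_abs_self (u * v)
    have h2 : |u * v| ≤ a * n * (b * n) := by
      rw [abs_mul]; exact mul_le_mul hu hv (abs_nonneg v) (by positivity)
    nlinarith
  have hMexp : M = p₁ * (A₁ ^ 2 * n ^ 2 - u ^ 2) + p₂ * (A₂ ^ 2 * n ^ 2 - v ^ 2)
      + (p₁ + p₂) * (A₁ * A₂ * n ^ 2 - u * v) := by
    rw [hM, inner_add_left, inner_add_left, real_inner_smul_left, real_inner_smul_left]
    ring
  have hn2 : (0:ℝ) ≤ n ^ 2 := sq_nonneg n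
  have h1 : p₁ * (ε ^ 2 * n ^ 2) ≤ p₁ * (A₁ ^ 2 * n ^ 2 - u ^ 2) :=
    mul_le_mul_of_nonneg_left (by nlinarith) hp₁
  have h2 : p₂ * (ε ^ 2 * n ^ 2) ≤ p₂ * (A₂ ^ 2 * n ^ 2 - v ^ 2) :=
    mul_le_mul_of_nonneg_left (by nlinarith) hp₂
  have h3 : (p₁ + p₂) * (ε ^ 2 * n ^ 2) ≤ (p₁ + p₂) * (A₁ * A₂ * n ^ 2 - u * v) :=
    mul_le_mul_of_nonneg_left (by nlinarith [mul_le_mul_of_nonneg_right hAA hn2]) (by linarith)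
  linarith
end

section
/- Let E be a real inner product space, ε > 0, K ≥ 0, p₁, p₂ ≥ 0 real numbers, and g₁, g₂ ∈ E with ‖g₁‖ ≤ K and ‖g₂‖ ≤ K. Set A₁ := √(‖g₁‖²+ε²) and A₂ := √(‖g₂‖²+ε²). Then ⟨p₁·g₁/A₁ − p₂·g₂/A₂, g₁ − g₂⟩ ≥ ((p₁+p₂)·ε² / (2·(K²+ε²)^{3/2}))·‖g₁−g₂‖² − |p₁−p₂|·‖g₁−g₂‖. -/
/-- Key scalar estimate: `M²(ε² + AB − ab) ≥ 2ABε²` when `a² = A²−ε²`, `b² = B²−ε²`,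
`ε ≤ A, B ≤ M`. -/
theorem stmt5_key_scalar (ε M A B a b : ℝ) (hε : 0 < ε) (ha : 0 ≤ a) (hb : 0 ≤ b)
    (hA : ε ≤ A) (hB : ε ≤ B) (hAM : A ≤ M) (hBM : B ≤ M)
    (ha2 : a ^ 2 = A ^ 2 - ε ^ 2) (hb2 : b ^ 2 = B ^ 2 - ε ^ 2) :
    2 * A * B * ε ^ 2 ≤ M ^ 2 * (ε ^ 2 + A * B - a * b) := by
  have hεA : 0 < A := lt_of_lt_of_le hε hA
  have hεB : 0 < B := lt_of_lt_of_le hε hB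
  have hM : 0 < M := lt_of_lt_of_le hεA hAM
  have hABM : A * B ≤ M ^ 2 := by nlinarith
  have hεAB : ε ^ 2 ≤ A * B := by nlinarith
  have hεM : ε ^ 2 ≤ M ^ 2 := by nlinarith
  set X := M ^ 2 * (ε ^ 2 + A * B) - 2 * A * B * ε ^ 2 with hX
  set Y := M ^ 2 * (a * b) with hY
  have hXnn : 0 ≤ X := by
    nlinarith [mul_nonneg (sub_nonneg.mpr hABM) (sq_nonneg ε),
      mul_nonneg (mul_nonneg hεA.le hεB.le) (sub_nonneg.mpr hεM)]
  have hYnn : 0 ≤ Y := by positivity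
  have hab2 : (a * b) ^ 2 = (A ^ 2 - ε ^ 2) * (B ^ 2 - ε ^ 2) := by
    rw [mul_pow, ha2, hb2]
  have hXY : Y ^ 2 ≤ X ^ 2 := by
    have h1 : 0 ≤ M ^ 4 * (A - B) ^ 2 := by positivity
    have h2 : 0 ≤ 4 * (A * B) * (M ^ 2 - A * B) * (M ^ 2 - ε ^ 2) := by
      have hh1 := sub_nonneg.mpr hABM
      have hh2 := sub_nonneg.mpr hεM
      positivity
    have hid : X ^ 2 - Y ^ 2
        = ε ^ 2 * (M ^ 4 * (A - B) ^ 2 + 4 * (A * B) * (M ^ 2 - A * B) * (M ^ 2 - ε ^ 2)) := by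
      rw [hX, hY]
      linear_combination (-(M ^ 4)) * hab2
    nlinarith [h1, h2, sq_nonneg ε, mul_nonneg (sq_nonneg ε) (add_nonneg h1 h2), hid]
  have : Y ≤ X := by nlinarith [hXY, hXnn, hYnn]
  nlinarith [this]

set_option maxHeartbeats 1000000 in
/-- Lower bound for the symmetric part `T = (a²−s)/A + (b²−s)/B`. -/
theorem stmt5_T_lower (ε M A B a b d s : ℝ) (hε : 0 < ε) (ha : 0 ≤ a) (hb : 0 ≤ b)
    (hd : 0 ≤ d) (hA : ε ≤ A) (hAM : A ≤ M) (hB : ε ≤ B) (hBM : B ≤ M)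
    (ha2 : a ^ 2 = A ^ 2 - ε ^ 2) (hb2 : b ^ 2 = B ^ 2 - ε ^ 2)
    (hd2 : d ^ 2 = a ^ 2 + b ^ 2 - 2 * s) (habd : (a - b) ^ 2 ≤ d ^ 2) :
    ε ^ 2 * d ^ 2 / M ^ 3 ≤ (a ^ 2 - s) / A + (b ^ 2 - s) / B := by
  have hεA : 0 < A := lt_of_lt_of_le hε hA
  have hεB : 0 < B := lt_of_lt_of_le hε hB
  have hM : 0 < M := lt_of_lt_of_le hεA hAM
  have hkey : 2 * A * B * ε ^ 2 ≤ M ^ 2 * (ε ^ 2 + A * B - a * b) :=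
    stmt5_key_scalar ε M A B a b hε ha hb hA hB hAM hBM ha2 hb2
  have hpoly : 2 * B * (a ^ 2 - s) + 2 * A * (b ^ 2 - s)
      = (A + B) * (d ^ 2 - (A - B) ^ 2) := by
    linear_combination (-(A + B)) * hd2 + (B - A) * ha2 + (A - B) * hb2
  have hTmul : ((a ^ 2 - s) / A + (b ^ 2 - s) / B) * (2 * A * B)
      = 2 * B * (a ^ 2 - s) + 2 * A * (b ^ 2 - s) := by
    field_simp
  rw [div_le_iff₀ (by positivity : (0:ℝ) < M ^ 3)]
  rw [← mul_le_mul_iff_of_pos_right (by positivity : (0:ℝ) < 2 * A * B)]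
  have hgoal_eq : ((a ^ 2 - s) / A + (b ^ 2 - s) / B) * M ^ 3 * (2 * A * B)
      = (A + B) * (d ^ 2 - (A - B) ^ 2) * M ^ 3 := by
    rw [show ((a ^ 2 - s) / A + (b ^ 2 - s) / B) * M ^ 3 * (2 * A * B)
        = ((a ^ 2 - s) / A + (b ^ 2 - s) / B) * (2 * A * B) * M ^ 3 by ring, hTmul, hpoly]
  rw [hgoal_eq]
  -- goal : ε² d² (2AB) ≤ (A+B)(d² − (A−B)²) M³
  have hkey0 : (A + B) ^ 2 * (A - B) ^ 2 ≤ (a + b) ^ 2 * d ^ 2 := by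
    have hid : (A + B) ^ 2 * (A - B) ^ 2 = (a + b) ^ 2 * (a - b) ^ 2 := by
      linear_combination (-(a ^ 2 - b ^ 2 + A ^ 2 - B ^ 2)) * ha2
        + (a ^ 2 - b ^ 2 + A ^ 2 - B ^ 2) * hb2
    rw [hid]
    exact mul_le_mul_of_nonneg_left habd (by positivity)
  have q1 : d ^ 2 * ((A + B) ^ 2 - (a + b) ^ 2)
      ≤ (A + B) ^ 2 * (d ^ 2 - (A - B) ^ 2) := by nlinarith [hkey0, sq_nonneg d]
  have q2 : (A + B) ^ 2 - (a + b) ^ 2 = 2 * (ε ^ 2 + A * B - a * b) := by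
    linear_combination -ha2 - hb2
  have r1 : 2 * A * B * ε ^ 2 * d ^ 2 ≤ M ^ 2 * (ε ^ 2 + A * B - a * b) * d ^ 2 :=
    mul_le_mul_of_nonneg_right hkey (sq_nonneg d)
  have r0 : 0 ≤ 2 * A * B * ε ^ 2 * d ^ 2 := by positivity
  have r2 : (A + B) * (2 * A * B * ε ^ 2 * d ^ 2)
      ≤ 2 * M * (M ^ 2 * (ε ^ 2 + A * B - a * b) * d ^ 2) := by
    have hAB2M : A + B ≤ 2 * M := by linarith
    calc (A + B) * (2 * A * B * ε ^ 2 * d ^ 2)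
        ≤ (2 * M) * (2 * A * B * ε ^ 2 * d ^ 2) := mul_le_mul_of_nonneg_right hAB2M r0
      _ ≤ (2 * M) * (M ^ 2 * (ε ^ 2 + A * B - a * b) * d ^ 2) :=
          mul_le_mul_of_nonneg_left r1 (by positivity)
  have r3 : 2 * M * (M ^ 2 * (ε ^ 2 + A * B - a * b) * d ^ 2)
      = M ^ 3 * (d ^ 2 * ((A + B) ^ 2 - (a + b) ^ 2)) := by rw [q2]; ring
  have r4 : M ^ 3 * (d ^ 2 * ((A + B) ^ 2 - (a + b) ^ 2))
      ≤ M ^ 3 * ((A + B) ^ 2 * (d ^ 2 - (A - B) ^ 2)) :=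
    mul_le_mul_of_nonneg_left q1 (by positivity)
  have r5 : (A + B) * (2 * A * B * ε ^ 2 * d ^ 2)
      ≤ (A + B) * ((A + B) * (d ^ 2 - (A - B) ^ 2) * M ^ 3) := by linarith [r2, r3, r4]
  have := le_of_mul_le_mul_left (by linarith [r5] :
    (A + B) * (ε ^ 2 * d ^ 2 * (2 * A * B)) ≤ (A + B) * ((A + B) * (d ^ 2 - (A - B) ^ 2) * M ^ 3))
    (by positivity : (0:ℝ) < A + B)
  linarith [this]

set_option maxHeartbeats 1000000 in
/-- Monotonicity inequality for the pointwise nonlinearity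
`(p, g) ↦ p·g/√(‖g‖²+ε²)` of the regularized viscous-plastic stress `𝕊_ε`. -/
theorem stmt5 {E : Type*} [NormedAddCommGroup E] [InnerProductSpace ℝ E]
    (ε K : ℝ) (hε : 0 < ε) (hK : 0 ≤ K)
    (p₁ p₂ : ℝ) (hp₁ : 0 ≤ p₁) (hp₂ : 0 ≤ p₂)
    (g₁ g₂ : E) (hg₁ : ‖g₁‖ ≤ K) (hg₂ : ‖g₂‖ ≤ K)
    (A₁ A₂ : ℝ)
    (hA₁ : A₁ = Real.sqrt (‖g₁‖ ^ 2 + ε ^ 2))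
    (hA₂ : A₂ = Real.sqrt (‖g₂‖ ^ 2 + ε ^ 2)) :
    (inner ℝ ((p₁ / A₁) • g₁ - (p₂ / A₂) • g₂) (g₁ - g₂) : ℝ)
      ≥ ((p₁ + p₂) * ε ^ 2 / (2 * (K ^ 2 + ε ^ 2) ^ ((3 : ℝ) / 2))) * ‖g₁ - g₂‖ ^ 2
        - |p₁ - p₂| * ‖g₁ - g₂‖ := by
  set a := ‖g₁‖ with ha_def
  set b := ‖g₂‖ with hb_def
  set d := ‖g₁ - g₂‖ with hd_def
  have ha : (0:ℝ) ≤ a := norm_nonneg _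
  have hb : (0:ℝ) ≤ b := norm_nonneg _
  have hd : (0:ℝ) ≤ d := norm_nonneg _
  set M := Real.sqrt (K ^ 2 + ε ^ 2) with hM_def
  have hM2 : M ^ 2 = K ^ 2 + ε ^ 2 := Real.sq_sqrt (by positivity)
  have hMpos : 0 < M := Real.sqrt_pos.mpr (by positivity)
  have hL : (K ^ 2 + ε ^ 2) ^ ((3 : ℝ) / 2) = M ^ 3 := by
    rw [hM_def, ← Real.rpow_natCast (Real.sqrt _) 3, Real.sqrt_eq_rpow,
      ← Real.rpow_mul (by positivity)]
    norm_num
  have hA1sq : A₁ ^ 2 = a ^ 2 + ε ^ 2 := by rw [hA₁]; exact Real.sq_sqrt (by positivity)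
  have hA2sq : A₂ ^ 2 = b ^ 2 + ε ^ 2 := by rw [hA₂]; exact Real.sq_sqrt (by positivity)
  have hA1pos : 0 < A₁ := by rw [hA₁]; exact Real.sqrt_pos.mpr (by positivity)
  have hA2pos : 0 < A₂ := by rw [hA₂]; exact Real.sqrt_pos.mpr (by positivity)
  have haK : a ^ 2 ≤ K ^ 2 := pow_le_pow_left₀ ha hg₁ 2
  have hbK : b ^ 2 ≤ K ^ 2 := pow_le_pow_left₀ hb hg₂ 2
  have hεA1 : ε ≤ A₁ := by
    have h : Real.sqrt (ε ^ 2) ≤ Real.sqrt (a ^ 2 + ε ^ 2) :=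
      Real.sqrt_le_sqrt (by linarith [sq_nonneg a])
    rwa [Real.sqrt_sq hε.le, ← hA₁] at h
  have hεA2 : ε ≤ A₂ := by
    have h : Real.sqrt (ε ^ 2) ≤ Real.sqrt (b ^ 2 + ε ^ 2) :=
      Real.sqrt_le_sqrt (by linarith [sq_nonneg b])
    rwa [Real.sqrt_sq hε.le, ← hA₂] at h
  have hA1M : A₁ ≤ M := by
    rw [hA₁, hM_def]; exact Real.sqrt_le_sqrt (by linarith)
  have hA2M : A₂ ≤ M := by
    rw [hA₂, hM_def]; exact Real.sqrt_le_sqrt (by linarith)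
  have haA1 : a ≤ A₁ := by
    have h : Real.sqrt (a ^ 2) ≤ Real.sqrt (a ^ 2 + ε ^ 2) :=
      Real.sqrt_le_sqrt (by linarith [sq_nonneg ε])
    rwa [Real.sqrt_sq ha, ← hA₁] at h
  have hbA2 : b ≤ A₂ := by
    have h : Real.sqrt (b ^ 2) ≤ Real.sqrt (b ^ 2 + ε ^ 2) :=
      Real.sqrt_le_sqrt (by linarith [sq_nonneg ε])
    rwa [Real.sqrt_sq hb, ← hA₂] at h
  set s : ℝ := inner ℝ g₁ g₂ with hs_def
  have hd2 : d ^ 2 = a ^ 2 + b ^ 2 - 2 * s := by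
    rw [hd_def, ha_def, hb_def, hs_def, norm_sub_sq_real]; ring
  have habd : (a - b) ^ 2 ≤ d ^ 2 := by
    have h := abs_norm_sub_norm_le g₁ g₂
    calc (a - b) ^ 2 = |a - b| ^ 2 := (sq_abs _).symm
      _ ≤ d ^ 2 := by apply pow_le_pow_left₀ (abs_nonneg _) h
  -- Cauchy–Schwarz bounds for the two pieces
  have hc1 : |a ^ 2 - s| ≤ a * d := by
    have h := abs_real_inner_le_norm g₁ (g₁ - g₂)
    rwa [inner_sub_right, real_inner_self_eq_norm_sq, ← hs_def] at h
  have hc2 : |b ^ 2 - s| ≤ b * d := by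
    have h := abs_real_inner_le_norm g₂ (g₁ - g₂)
    rw [inner_sub_right, real_inner_self_eq_norm_sq, real_inner_comm, ← hs_def] at h
    rw [abs_sub_comm]
    exact h
  -- expansion of the inner product
  have hinner : (inner ℝ ((p₁ / A₁) • g₁ - (p₂ / A₂) • g₂) (g₁ - g₂) : ℝ)
      = p₁ / A₁ * (a ^ 2 - s) + p₂ / A₂ * (b ^ 2 - s) := by
    simp only [inner_sub_left, inner_sub_right, real_inner_smul_left,
      real_inner_self_eq_norm_sq, ← ha_def, ← hb_def]
    rw [show (inner ℝ g₂ g₁ : ℝ) = s by rw [hs_def]; exact (real_inner_comm g₂ g₁).symm,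
      show (inner ℝ g₁ g₂ : ℝ) = s from hs_def.symm]
    ring
  set T : ℝ := (a ^ 2 - s) / A₁ + (b ^ 2 - s) / A₂ with hT_def
  set S : ℝ := (a ^ 2 - s) / A₁ - (b ^ 2 - s) / A₂ with hS_def
  have hsplit : p₁ / A₁ * (a ^ 2 - s) + p₂ / A₂ * (b ^ 2 - s)
      = (p₁ + p₂) / 2 * T + (p₁ - p₂) / 2 * S := by
    rw [hT_def, hS_def]; field_simp; ring
  -- bound on S
  have hSbound : |S| ≤ 2 * d := by
    have h1 : |(a ^ 2 - s) / A₁| ≤ d := by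
      rw [abs_div, abs_of_pos hA1pos, div_le_iff₀ hA1pos]
      calc |a ^ 2 - s| ≤ a * d := hc1
        _ = d * a := mul_comm a d
        _ ≤ d * A₁ := mul_le_mul_of_nonneg_left haA1 hd
    have h2 : |(b ^ 2 - s) / A₂| ≤ d := by
      rw [abs_div, abs_of_pos hA2pos, div_le_iff₀ hA2pos]
      calc |b ^ 2 - s| ≤ b * d := hc2
        _ = d * b := mul_comm b d
        _ ≤ d * A₂ := mul_le_mul_of_nonneg_left hbA2 hd
    calc |S| ≤ |(a ^ 2 - s) / A₁| + |(b ^ 2 - s) / A₂| := abs_sub _ _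
      _ ≤ 2 * d := by linarith
  -- lower bound on T
  have hTlow : ε ^ 2 * d ^ 2 / M ^ 3 ≤ T :=
    stmt5_T_lower ε M A₁ A₂ a b d s hε ha hb hd hεA1 hA1M hεA2 hA2M
      (by linarith [hA1sq]) (by linarith [hA2sq]) hd2 habd
  -- put everything together
  rw [hinner, hsplit, hL, ge_iff_le]
  have hS2 : -(|p₁ - p₂| * d) ≤ (p₁ - p₂) / 2 * S := by
    have h1 : |(p₁ - p₂) / 2 * S| ≤ |p₁ - p₂| * d := by
      rw [abs_mul, abs_div, abs_two]
      calc |p₁ - p₂| / 2 * |S| ≤ |p₁ - p₂| / 2 * (2 * d) :=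
            mul_le_mul_of_nonneg_left hSbound (by positivity)
        _ = |p₁ - p₂| * d := by ring
    linarith [neg_abs_le ((p₁ - p₂) / 2 * S)]
  have hT1 : (p₁ + p₂) * ε ^ 2 / (2 * M ^ 3) * d ^ 2 ≤ (p₁ + p₂) / 2 * T := by
    have h1 : (p₁ + p₂) / 2 * (ε ^ 2 * d ^ 2 / M ^ 3) ≤ (p₁ + p₂) / 2 * T :=
      mul_le_mul_of_nonneg_left hTlow (by positivity)
    calc (p₁ + p₂) * ε ^ 2 / (2 * M ^ 3) * d ^ 2
        = (p₁ + p₂) / 2 * (ε ^ 2 * d ^ 2 / M ^ 3) := by field_simp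
      _ ≤ (p₁ + p₂) / 2 * T := h1
  linarith
end

section
/- Let E be a real inner product space, ε > 0, and g₁, g₂ ∈ E. Then ‖g₁/√(‖g₁‖²+ε²) − g₂/√(‖g₂‖²+ε²)‖ ≤ (2/ε)·‖g₁ − g₂‖. -/
/-- Lipschitz bound, with constant `2/ε`, for the pointwise nonlinearity
`g ↦ g/√(‖g‖²+ε²)` of the regularized viscous-plastic stress `𝕊_ε`. -/
theorem stmt7 {E : Type*} [NormedAddCommGroup E] [InnerProductSpace ℝ E]
    (ε : ℝ) (hε : 0 < ε) (g₁ g₂ : E) :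
    ‖(Real.sqrt (‖g₁‖ ^ 2 + ε ^ 2))⁻¹ • g₁ - (Real.sqrt (‖g₂‖ ^ 2 + ε ^ 2))⁻¹ • g₂‖
      ≤ (2 / ε) * ‖g₁ - g₂‖ := by
  set a := Real.sqrt (‖g₁‖ ^ 2 + ε ^ 2) with ha
  set b := Real.sqrt (‖g₂‖ ^ 2 + ε ^ 2) with hb
  have hεa : ε ≤ a := (Real.le_sqrt hε.le (by positivity)).mpr (by nlinarith [sq_nonneg ‖g₁‖])
  have hεb : ε ≤ b := (Real.le_sqrt hε.le (by positivity)).mpr (by nlinarith [sq_nonneg ‖g₂‖])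
  have ha0 : 0 < a := lt_of_lt_of_le hε hεa
  have hb0 : 0 < b := lt_of_lt_of_le hε hεb
  have hg2b : ‖g₂‖ ≤ b := (Real.le_sqrt (norm_nonneg _) (by positivity)).mpr (by nlinarith [sq_nonneg ε])
  have hg1a : ‖g₁‖ ≤ a := (Real.le_sqrt (norm_nonneg _) (by positivity)).mpr (by nlinarith [sq_nonneg ε])
  -- |a - b| ≤ ‖g₁ - g₂‖
  have hab : |a - b| ≤ ‖g₁ - g₂‖ := by
    have hsum : 0 < a + b := by linarith
    have hsq : a ^ 2 - b ^ 2 = ‖g₁‖ ^ 2 - ‖g₂‖ ^ 2 := by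
      rw [ha, hb, Real.sq_sqrt (by positivity), Real.sq_sqrt (by positivity)]
      ring
    have hdiff : (a - b) * (a + b) = (‖g₁‖ - ‖g₂‖) * (‖g₁‖ + ‖g₂‖) := by
      nlinarith [hsq]
    have hnorms : |‖g₁‖ - ‖g₂‖| ≤ ‖g₁ - g₂‖ := abs_norm_sub_norm_le g₁ g₂
    have hle : ‖g₁‖ + ‖g₂‖ ≤ a + b := by linarith
    have := abs_mul (a - b) (a + b)
    have h2 := abs_mul (‖g₁‖ - ‖g₂‖) (‖g₁‖ + ‖g₂‖)
    have key : |a - b| * (a + b) ≤ ‖g₁ - g₂‖ * (a + b) := by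
      calc |a - b| * (a + b) = |(a - b) * (a + b)| := by
            rw [abs_mul, abs_of_pos hsum]
        _ = |‖g₁‖ - ‖g₂‖| * |‖g₁‖ + ‖g₂‖| := by rw [hdiff, abs_mul]
        _ = |‖g₁‖ - ‖g₂‖| * (‖g₁‖ + ‖g₂‖) := by
            congr 1; exact abs_of_nonneg (by positivity)
        _ ≤ ‖g₁ - g₂‖ * (a + b) := by
            apply mul_le_mul hnorms hle (by positivity) (norm_nonneg _)
    exact le_of_mul_le_mul_right key hsum
  -- split
  have hsplit : a⁻¹ • g₁ - b⁻¹ • g₂ = a⁻¹ • (g₁ - g₂) + (a⁻¹ - b⁻¹) • g₂ := by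
    rw [smul_sub, sub_smul]; abel
  rw [hsplit]
  have h1 : ‖a⁻¹ • (g₁ - g₂)‖ ≤ (1 / ε) * ‖g₁ - g₂‖ := by
    rw [norm_smul, Real.norm_eq_abs, abs_of_pos (by positivity)]
    apply mul_le_mul_of_nonneg_right _ (norm_nonneg _)
    rw [one_div]
    exact inv_anti₀ hε hεa
  have h2 : ‖(a⁻¹ - b⁻¹) • g₂‖ ≤ (1 / ε) * ‖g₁ - g₂‖ := by
    rw [norm_smul, Real.norm_eq_abs]
    have hid : a⁻¹ - b⁻¹ = (b - a) / (a * b) := by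
      field_simp
    rw [hid, abs_div, abs_of_pos (by positivity : (0:ℝ) < a * b)]
    have hba : |b - a| ≤ ‖g₁ - g₂‖ := by rw [abs_sub_comm]; exact hab
    calc |b - a| / (a * b) * ‖g₂‖ ≤ ‖g₁ - g₂‖ / (a * b) * b := by
          apply mul_le_mul (by gcongr) hg2b (norm_nonneg _) (by positivity)
      _ = ‖g₁ - g₂‖ / a := by field_simp
      _ ≤ (1 / ε) * ‖g₁ - g₂‖ := by
          rw [div_eq_mul_inv, one_div, mul_comm]
          exact mul_le_mul_of_nonneg_right (inv_anti₀ hε hεa) (norm_nonneg _)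
  calc ‖a⁻¹ • (g₁ - g₂) + (a⁻¹ - b⁻¹) • g₂‖
      ≤ ‖a⁻¹ • (g₁ - g₂)‖ + ‖(a⁻¹ - b⁻¹) • g₂‖ := norm_add_le _ _
    _ ≤ (1 / ε) * ‖g₁ - g₂‖ + (1 / ε) * ‖g₁ - g₂‖ := add_le_add h1 h2
    _ = (2 / ε) * ‖g₁ - g₂‖ := by ring
end
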